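/- Let F = G − H be a direct sum decomposition of degree d, where G ∈ ℂ[x_1,…,x_i] and H ∈ ℂ[y_1,…,y_j] are nonzero forms of degree d in disjoint complementary sets of variables. Then there exist homogeneous elements δ_1 of degree d in the dual variables α_1,…,α_i with δ_1 ⌟ G = 1 and δ_2 of degree d in the dual variables β_1,…,β_j with δ_2 ⌟ H = 1, such that, setting Δ = δ_1 + δ_2, one has F^⊥ = (G^⊥ ∩ H^⊥) + ⟨Δ⟩; moreover (F^⊥)_k = (G^⊥ ∩ H^⊥)_k for every k ≠ d. -/

import Mathlib

/-!
Apolarity setup.  `S = ℂ[x_1,…,x_n]` and its dual ring `T = ℂ[α_1,…,α_n]` are both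
realized as `MvPolynomial (Fin n) ℂ`; the apolarity action `Θ ⌟ F` (`contract Θ F`)
lets `α_i` act as the partial differentiation operator `∂/∂x_i`.
-/

open MvPolynomial

noncomputable section Apolarity

/-- Partial derivatives on `ℂ[x_1,…,x_n]` commute. -/
lemma pderiv_pderiv_comm (n : ℕ) (i j : Fin n) (f : MvPolynomial (Fin n) ℂ) :
    pderiv i (pderiv j f) = pderiv j (pderiv i f) := by
  induction f using MvPolynomial.induction_on with
  | C a => simp
  | add p q hp hq => simp [hp, hq]
  | mul_X p k hp =>
    rcases eq_or_ne i k with rfl | hik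
    · rcases eq_or_ne j i with rfl | hjk
      · rfl
      · simp only [pderiv_mul, pderiv_X_self, pderiv_X_of_ne hjk, pderiv_X_of_ne hjk.symm,
          map_add, map_zero, map_one, Derivation.map_one_eq_zero, mul_one, mul_zero,
          add_zero, zero_add, hp]
    · rcases eq_or_ne j k with rfl | hjk
      · simp only [pderiv_mul, pderiv_X_self, pderiv_X_of_ne hik, pderiv_X_of_ne hik.symm,
          map_add, map_zero, map_one, Derivation.map_one_eq_zero, mul_one, mul_zero,
          add_zero, zero_add, hp]
      · simp only [pderiv_mul, pderiv_X_of_ne hik.symm, pderiv_X_of_ne hjk.symm, map_add,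
          map_zero, mul_zero, add_zero, zero_add, hp]

variable (n : ℕ)

/-- The endomorphism `∂/∂x_i` of `S = ℂ[x_1,…,x_n]`. -/
def derOp (i : Fin n) : Module.End ℂ (MvPolynomial (Fin n) ℂ) :=
  (pderiv i).toLinearMap

lemma derOp_commute (i j : Fin n) : Commute (derOp n i) (derOp n j) :=
  LinearMap.ext fun f => pderiv_pderiv_comm n i j f

/-- The commuting product of the operators `(∂/∂x_i)^(m i)`. -/
def piDiffHom : (Fin n → Multiplicative ℕ) →* Module.End ℂ (MvPolynomial (Fin n) ℂ) :=
  MonoidHom.noncommPiCoprod (fun i : Fin n => powersHom _ (derOp n i))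
    (fun i j _ x y => ((derOp_commute n i j).pow_pow x y))

/-- The differential operator `∏ i, (∂/∂x_i)^(m i)` attached to an exponent vector `m`. -/
def diffMonoidHom : Multiplicative (Fin n →₀ ℕ) →* Module.End ℂ (MvPolynomial (Fin n) ℂ) :=
  (piDiffHom n).comp
    (AddMonoidHom.toMultiplicative
      (Finsupp.coeFnAddHom : (Fin n →₀ ℕ) →+ (Fin n → ℕ)))

/-- The apolarity action of the dual ring `T = ℂ[α_1,…,α_n]` on `S = ℂ[x_1,…,x_n]`, as an
algebra homomorphism to differential operators: `α_i` acts as `∂/∂x_i`. -/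
def apolarAlgHom :
    MvPolynomial (Fin n) ℂ →ₐ[ℂ] Module.End ℂ (MvPolynomial (Fin n) ℂ) :=
  AddMonoidAlgebra.lift ℂ _ (Fin n →₀ ℕ) (diffMonoidHom n)

variable {n}

/-- The apolarity action `Θ ⌟ F`: apply to `F` the differential operator obtained from `Θ`
by substituting `∂/∂x_i` for the `i`-th (dual) variable. -/
def contract (Θ F : MvPolynomial (Fin n) ℂ) : MvPolynomial (Fin n) ℂ :=
  apolarAlgHom n Θ F

lemma apolarAlgHom_X (i : Fin n) : apolarAlgHom n (X i) = derOp n i := by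
  classical
  have hX : (X i : MvPolynomial (Fin n) ℂ)
      = AddMonoidAlgebra.single (Finsupp.single i 1) (1 : ℂ) := rfl
  rw [hX]
  rw [show apolarAlgHom n (AddMonoidAlgebra.single (Finsupp.single i 1) (1:ℂ))
      = (1:ℂ) • diffMonoidHom n (Multiplicative.ofAdd (Finsupp.single i 1)) from
    AddMonoidAlgebra.lift_single _ _ _]
  rw [one_smul]
  rw [diffMonoidHom]
  have harg : (AddMonoidHom.toMultiplicative
        (Finsupp.coeFnAddHom : (Fin n →₀ ℕ) →+ (Fin n → ℕ)))
        (Multiplicative.ofAdd (Finsupp.single i 1))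
      = Pi.mulSingle (M := fun _ : Fin n => Multiplicative ℕ) i (Multiplicative.ofAdd 1) := by
    funext j
    rcases eq_or_ne j i with rfl | hj
    · show Multiplicative.ofAdd ((Finsupp.single j 1 : Fin n →₀ ℕ) j)
        = Pi.mulSingle (M := fun _ : Fin n => Multiplicative ℕ) j (Multiplicative.ofAdd 1) j
      rw [Finsupp.single_eq_same, Pi.mulSingle_eq_same]
    · show Multiplicative.ofAdd ((Finsupp.single i 1 : Fin n →₀ ℕ) j)
        = Pi.mulSingle (M := fun _ : Fin n => Multiplicative ℕ) i (Multiplicative.ofAdd 1) j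
      rw [Finsupp.single_eq_of_ne hj, Pi.mulSingle_eq_of_ne hj]
      exact ofAdd_zero
  refine (congrArg (piDiffHom n) harg).trans ?_
  rw [piDiffHom]
  refine (MonoidHom.noncommPiCoprod_mulSingle _ _ _).trans ?_
  rfl

/-- Sanity check: the dual variable `α_i` acts on `F` as `∂F/∂x_i`. -/
@[simp] lemma contract_X (i : Fin n) (F : MvPolynomial (Fin n) ℂ) :
    contract (X i) F = pderiv i F := by
  rw [contract, apolarAlgHom_X]; rfl

/-- The apolar (annihilator) ideal `F^⊥ = {Θ ∈ T : Θ ⌟ F = 0}` of a polynomial `F`. -/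
def apolarIdeal (F : MvPolynomial (Fin n) ℂ) : Ideal (MvPolynomial (Fin n) ℂ) where
  carrier := {Θ | contract Θ F = 0}
  zero_mem' := by simp [contract]
  add_mem' := by
    intro a b ha hb
    simp only [Set.mem_setOf_eq, contract, map_add, LinearMap.add_apply] at *
    rw [ha, hb, add_zero]
  smul_mem' := by
    intro c x hx
    simp only [Set.mem_setOf_eq, smul_eq_mul, contract, map_mul, Module.End.mul_apply] at *
    rw [hx, map_zero]

@[simp] lemma mem_apolarIdeal {Θ F : MvPolynomial (Fin n) ℂ} :
    Θ ∈ apolarIdeal F ↔ contract Θ F = 0 := Iff.rfl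

variable (n)

/-- The irrelevant maximal ideal `m = ⟨α_1,…,α_n⟩` of `T`. -/
def irrIdeal : Ideal (MvPolynomial (Fin n) ℂ) :=
  Ideal.span (Set.range X)

variable {n}

/-- The homogeneous ideal `I` has a minimal generator of degree `k`, i.e. `(I/mI)_k ≠ 0`:
there is a homogeneous element of `I` of degree `k` not belonging to `m * I`. -/
def HasMinGenOfDegree (I : Ideal (MvPolynomial (Fin n) ℂ)) (k : ℕ) : Prop :=
  ∃ Θ, Θ ∈ I ∧ Θ.IsHomogeneous k ∧ Θ ∉ irrIdeal n * I

/-- The homogeneous ideal `I` has at least `r` minimal generators of degree `k`, i.e.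
`dim_ℂ (I/mI)_k ≥ r`: there are `r` homogeneous degree-`k` elements of `I` that are
linearly independent modulo `m * I`. -/
def MinGensAtLeast (I : Ideal (MvPolynomial (Fin n) ℂ)) (k r : ℕ) : Prop :=
  ∃ Θ : Fin r → MvPolynomial (Fin n) ℂ,
    (∀ i, Θ i ∈ I ∧ (Θ i).IsHomogeneous k) ∧
    ∀ c : Fin r → ℂ, (∑ i, c i • Θ i) ∈ irrIdeal n * I → ∀ i, c i = 0

/-- `F` is an `s`-fold direct sum of degree `d`: `F = F_1 + ⋯ + F_s` where the `F_i` are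
nonzero degree-`d` forms in independent subspaces `V_i` of the space of linear forms with
`V = V_1 ⊕ ⋯ ⊕ V_s` (i.e. in disjoint sets of variables, up to linear change of variables;
`F_i ∈ S^d V_i` is expressed as membership in the subalgebra generated by `V_i`). -/
def IsSFoldDirectSum (F : MvPolynomial (Fin n) ℂ) (d s : ℕ) : Prop :=
  ∃ (V : Fin s → Submodule ℂ (MvPolynomial (Fin n) ℂ))
    (G : Fin s → MvPolynomial (Fin n) ℂ),
    (∀ i, V i ≤ homogeneousSubmodule (Fin n) ℂ 1) ∧
    iSupIndep V ∧
    (⨆ i, V i) = homogeneousSubmodule (Fin n) ℂ 1 ∧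
    (∀ i, G i ≠ 0 ∧ (G i).IsHomogeneous d ∧ G i ∈ Algebra.adjoin ℂ (V i : Set _)) ∧
    F = ∑ i, G i

/-- `F` is a direct sum: `F = F₁ + F₂` with `F₁ ∈ S^d V₁`, `F₂ ∈ S^d V₂` nonzero and
`V = V₁ ⊕ V₂`. -/
def IsDirectSum (F : MvPolynomial (Fin n) ℂ) (d : ℕ) : Prop :=
  IsSFoldDirectSum F d 2

/-- `F` is a limit (as `t → 0`) of `s`-fold direct sums of degree `d`. -/
def IsLimitOfSFoldDirectSums (F : MvPolynomial (Fin n) ℂ) (d s : ℕ) : Prop :=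
  ∃ G : ℂ → MvPolynomial (Fin n) ℂ,
    (∀ t : ℂ, t ≠ 0 → IsSFoldDirectSum (G t) d s) ∧
    ∀ m : Fin n →₀ ℕ,
      Filter.Tendsto (fun t => MvPolynomial.coeff m (G t))
        (nhdsWithin (0 : ℂ) {(0 : ℂ)}ᶜ) (nhds (MvPolynomial.coeff m F))

/-- `F` is a limit of direct sums. -/
def IsLimitOfDirectSums (F : MvPolynomial (Fin n) ℂ) (d : ℕ) : Prop :=
  IsLimitOfSFoldDirectSums F d 2

/-- `F` is concise: `(F^⊥)_1 = 0`, i.e. `F` cannot be written using fewer variables. -/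
def Concise (F : MvPolynomial (Fin n) ℂ) : Prop :=
  ∀ Θ : MvPolynomial (Fin n) ℂ, Θ.IsHomogeneous 1 → contract Θ F = 0 → Θ = 0

end Apolarity

noncomputable section AuxApolar

variable {n : ℕ}

lemma contract_def (Θ F : MvPolynomial (Fin n) ℂ) : contract Θ F = apolarAlgHom n Θ F := rfl

lemma contract_mul' (P Q F : MvPolynomial (Fin n) ℂ) :
    contract (P * Q) F = contract P (contract Q F) := by
  simp only [contract_def, map_mul, Module.End.mul_apply]

lemma contract_C' (a : ℂ) (F : MvPolynomial (Fin n) ℂ) : contract (C a) F = a • F := by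
  rw [contract_def, ← MvPolynomial.algebraMap_eq, AlgHom.commutes, Module.algebraMap_end_apply]

lemma contract_add_left (P Q F : MvPolynomial (Fin n) ℂ) :
    contract (P + Q) F = contract P F + contract Q F := by
  simp only [contract_def, map_add, LinearMap.add_apply]

lemma contract_sub_right (Θ F G₂ : MvPolynomial (Fin n) ℂ) :
    contract Θ (F - G₂) = contract Θ F - contract Θ G₂ := by
  simp only [contract_def, map_sub]

lemma contract_zero_right (Θ : MvPolynomial (Fin n) ℂ) : contract Θ 0 = 0 := by
  simp only [contract_def, map_zero]

lemma contract_smul_left (a : ℂ) (P F : MvPolynomial (Fin n) ℂ) :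
    contract (a • P) F = a • contract P F := by
  rw [MvPolynomial.smul_eq_C_mul, contract_mul', contract_C']

lemma derOp_pow_monomial (k : Fin n) (e : ℕ) (s : Fin n →₀ ℕ) (b : ℂ) :
    ((derOp n k ^ e) (monomial s b)) =
      monomial (s - Finsupp.single k e) (b * (Nat.descFactorial (s k) e : ℂ)) := by
  induction e with
  | zero => simp
  | succ e ih =>
    rw [pow_succ', Module.End.mul_apply, ih]
    have h1 : derOp n k (monomial (s - Finsupp.single k e) (b * (Nat.descFactorial (s k) e : ℂ)))
        = monomial (s - Finsupp.single k e - Finsupp.single k 1)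
            (b * (Nat.descFactorial (s k) e : ℂ) * ((s - Finsupp.single k e) k : ℂ)) := by
      simp [derOp, pderiv_monomial]
    rw [h1]
    have h2 : s - Finsupp.single k e - Finsupp.single k 1 = s - Finsupp.single k (e + 1) := by
      rw [tsub_tsub, ← Finsupp.single_add]
    have h3 : (s - Finsupp.single k e) k = s k - e := by
      simp [Finsupp.tsub_apply]
    rw [h2, h3]
    congr 1
    rw [Nat.descFactorial_succ]
    push_cast
    ring

lemma contract_X_pow (k : Fin n) (e : ℕ) (F : MvPolynomial (Fin n) ℂ) :
    contract (X k ^ e) F = (derOp n k ^ e) F := by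
  rw [contract_def, map_pow, apolarAlgHom_X]

lemma contract_monomial (m s : Fin n →₀ ℕ) (a b : ℂ) :
    contract (monomial m a) (monomial s b) =
      monomial (s - m) (a * b * ∏ l : Fin n, (Nat.descFactorial (s l) (m l) : ℂ)) := by
  have key : ∀ m s : Fin n →₀ ℕ, ∀ b : ℂ,
      contract (monomial m 1) (monomial s b) =
        monomial (s - m) (b * ∏ l : Fin n, (Nat.descFactorial (s l) (m l) : ℂ)) := by
    intro m
    induction m using Finsupp.induction with
    | zero =>
      intro s b
      simp only [monomial_zero', contract_C', Finsupp.coe_zero, Pi.zero_apply,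
        Nat.descFactorial_zero, Nat.cast_one, Finset.prod_const_one, mul_one, tsub_zero,
        one_smul]
    | single_add k e f hk he ih =>
      intro s b
      have hsplit : monomial (Finsupp.single k e + f) (1 : ℂ) = monomial f 1 * X k ^ e := by
        rw [X_pow_eq_monomial, monomial_mul, mul_one, add_comm]
      rw [hsplit, contract_mul', contract_X_pow, derOp_pow_monomial, ih]
      have hfk : f k = 0 := Finsupp.notMem_support_iff.mp hk
      have h2 : s - Finsupp.single k e - f = s - (Finsupp.single k e + f) := by
        rw [tsub_tsub]
      rw [h2]
      congr 1
      have hterm : ∀ l : Fin n, (Nat.descFactorial (s l) ((Finsupp.single k e + f) l) : ℂ)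
          = (if l = k then (Nat.descFactorial (s k) e : ℂ) else 1)
            * (Nat.descFactorial ((s - Finsupp.single k e) l) (f l) : ℂ) := by
        intro l
        rcases eq_or_ne l k with rfl | h
        · rw [if_pos rfl, Finsupp.add_apply, Finsupp.single_eq_same, hfk, add_zero,
            Nat.descFactorial_zero, Nat.cast_one, mul_one]
        · rw [if_neg h, Finsupp.add_apply, Finsupp.single_eq_of_ne h, zero_add,
            Finsupp.tsub_apply, Finsupp.single_eq_of_ne h, Nat.sub_zero, one_mul]
      have hprod : ∏ l : Fin n, (Nat.descFactorial (s l) ((Finsupp.single k e + f) l) : ℂ)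
          = (Nat.descFactorial (s k) e : ℂ)
            * ∏ l : Fin n, (Nat.descFactorial ((s - Finsupp.single k e) l) (f l) : ℂ) := by
        calc ∏ l : Fin n, (Nat.descFactorial (s l) ((Finsupp.single k e + f) l) : ℂ)
            = ∏ l : Fin n, ((if l = k then (Nat.descFactorial (s k) e : ℂ) else 1)
                * (Nat.descFactorial ((s - Finsupp.single k e) l) (f l) : ℂ)) :=
              Finset.prod_congr rfl fun l _ => hterm l
          _ = (∏ l : Fin n, (if l = k then (Nat.descFactorial (s k) e : ℂ) else 1))
                * ∏ l : Fin n, (Nat.descFactorial ((s - Finsupp.single k e) l) (f l) : ℂ) :=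
              Finset.prod_mul_distrib
          _ = (Nat.descFactorial (s k) e : ℂ)
                * ∏ l : Fin n, (Nat.descFactorial ((s - Finsupp.single k e) l) (f l) : ℂ) := by
              rw [Finset.prod_ite_eq' Finset.univ k
                (fun _ => (Nat.descFactorial (s k) e : ℂ)), if_pos (Finset.mem_univ k)]
      rw [hprod]
      ring
  have hma : monomial m a = a • monomial m (1 : ℂ) := by
    rw [smul_monomial, smul_eq_mul, mul_one]
  rw [hma, contract_smul_left, key, smul_monomial, smul_eq_mul, ← mul_assoc]

lemma contract_sub_left (P Q F : MvPolynomial (Fin n) ℂ) :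
    contract (P - Q) F = contract P F - contract Q F := by
  simp only [contract_def, map_sub, LinearMap.sub_apply]

lemma contract_monomial_left (m : Fin n →₀ ℕ) (a : ℂ) (F : MvPolynomial (Fin n) ℂ) :
    contract (monomial m a) F = ∑ s ∈ F.support,
      monomial (s - m) (a * F.coeff s * ∏ l : Fin n, (Nat.descFactorial (s l) (m l) : ℂ)) := by
  conv_lhs => rw [F.as_sum]
  rw [contract_def, map_sum]
  exact Finset.sum_congr rfl fun s _ => contract_monomial m s a (F.coeff s)

lemma contract_eq_sum (Θ F : MvPolynomial (Fin n) ℂ) :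
    contract Θ F = ∑ m ∈ Θ.support, ∑ s ∈ F.support,
      monomial (s - m)
        (Θ.coeff m * F.coeff s * ∏ l : Fin n, (Nat.descFactorial (s l) (m l) : ℂ)) := by
  conv_lhs => rw [Θ.as_sum]
  rw [contract_def, map_sum, LinearMap.sum_apply]
  exact Finset.sum_congr rfl fun m _ => contract_monomial_left m (Θ.coeff m) F

lemma degree_add' (a b : Fin n →₀ ℕ) : (a + b).degree = a.degree + b.degree := by
  simp only [Finsupp.degree_eq_weight_one, map_add]

lemma degree_eq_sum_univ (f : Fin n →₀ ℕ) : f.degree = ∑ l : Fin n, f l :=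
  (Finset.sum_subset (Finset.subset_univ _)
    (fun x _ hx => Finsupp.notMem_support_iff.mp hx))

lemma isHomog_support_degree {F : MvPolynomial (Fin n) ℂ} {d : ℕ} (hF : F.IsHomogeneous d)
    {s : Fin n →₀ ℕ} (hs : s ∈ F.support) : s.degree = d := by
  have h := hF (MvPolynomial.mem_support_iff.mp hs)
  rwa [Finsupp.degree_eq_weight_one]

lemma exists_lt_of_not_le {m s : Fin n →₀ ℕ} (h : ¬ m ≤ s) : ∃ l, s l < m l := by
  by_contra hcon
  push_neg at hcon
  exact h (Finsupp.le_def.mpr fun l => hcon l)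

lemma contract_isHomogeneous {Θ F : MvPolynomial (Fin n) ℂ} {k d : ℕ}
    (hΘ : Θ.IsHomogeneous k) (hF : F.IsHomogeneous d) :
    (contract Θ F).IsHomogeneous (d - k) := by
  rw [contract_eq_sum, ← mem_homogeneousSubmodule]
  refine Submodule.sum_mem _ fun m hm => Submodule.sum_mem _ fun s hs => ?_
  rw [mem_homogeneousSubmodule]
  by_cases hms : m ≤ s
  · apply isHomogeneous_monomial
    have h1 : (s - m).degree + m.degree = s.degree := by
      rw [← degree_add', tsub_add_cancel_of_le hms]
    have h2 : m.degree = k := isHomog_support_degree hΘ hm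
    have h3 : s.degree = d := isHomog_support_degree hF hs
    omega
  · obtain ⟨l, hl⟩ := exists_lt_of_not_le hms
    have hz : (Nat.descFactorial (s l) (m l) : ℂ) = 0 := by
      rw [Nat.descFactorial_of_lt hl, Nat.cast_zero]
    rw [Finset.prod_eq_zero (Finset.mem_univ l) hz, mul_zero, monomial_zero]
    exact isHomogeneous_zero _ _ _

lemma contract_eq_zero_of_lt {Θ F : MvPolynomial (Fin n) ℂ} {k d : ℕ}
    (hΘ : Θ.IsHomogeneous k) (hF : F.IsHomogeneous d) (hdk : d < k) :
    contract Θ F = 0 := by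
  rw [contract_eq_sum]
  refine Finset.sum_eq_zero fun m hm => Finset.sum_eq_zero fun s hs => ?_
  have hms : ¬ m ≤ s := by
    intro hle
    have h1 : m.degree ≤ s.degree := by
      rw [degree_eq_sum_univ, degree_eq_sum_univ]
      exact Finset.sum_le_sum fun l _ => Finsupp.le_def.mp hle l
    rw [isHomog_support_degree hΘ hm, isHomog_support_degree hF hs] at h1
    omega
  obtain ⟨l, hl⟩ := exists_lt_of_not_le hms
  have hz : (Nat.descFactorial (s l) (m l) : ℂ) = 0 := by
    rw [Nat.descFactorial_of_lt hl, Nat.cast_zero]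
  rw [Finset.prod_eq_zero (Finset.mem_univ l) hz, mul_zero, monomial_zero]

variable {m : ℕ}

lemma pderiv_rename_zero {f : Fin m → Fin n} (k : Fin n) (hk : k ∉ Set.range f)
    (p : MvPolynomial (Fin m) ℂ) : pderiv k (rename f p) = 0 := by
  classical
  apply pderiv_eq_zero_of_notMem_vars
  intro hmem
  obtain ⟨l, -, hl⟩ := Finset.mem_image.mp (vars_rename f p hmem)
  exact hk ⟨l, hl⟩

lemma pderiv_mem_range {f : Fin m → Fin n} (hf : Function.Injective f) (k : Fin n)
    {P : MvPolynomial (Fin n) ℂ} (hP : P ∈ (rename f (R := ℂ)).range) :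
    pderiv k P ∈ (rename f (R := ℂ)).range := by
  obtain ⟨p, rfl⟩ := (AlgHom.mem_range _).mp hP
  by_cases hk : k ∈ Set.range f
  · obtain ⟨l, rfl⟩ := hk
    rw [pderiv_rename hf]
    exact ⟨_, rfl⟩
  · rw [pderiv_rename_zero k hk]
    exact Subalgebra.zero_mem _

lemma contract_mem_range {f : Fin m → Fin n} (hf : Function.Injective f)
    (Θ : MvPolynomial (Fin n) ℂ) {P : MvPolynomial (Fin n) ℂ}
    (hP : P ∈ (rename f (R := ℂ)).range) :
    contract Θ P ∈ (rename f (R := ℂ)).range := by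
  induction Θ using MvPolynomial.induction_on generalizing P with
  | C a => rw [contract_C']; exact Subalgebra.smul_mem _ hP a
  | add p q hp hq => rw [contract_add_left]; exact add_mem (hp hP) (hq hP)
  | mul_X p k hp =>
    rw [contract_mul', contract_X]
    exact hp (pderiv_mem_range hf k hP)

lemma contract_monomial_eq_zero {m₀ : Fin n →₀ ℕ} {k : Fin n} (hk : m₀ k ≠ 0) (a : ℂ)
    {F : MvPolynomial (Fin n) ℂ} (hF : pderiv k F = 0) : contract (monomial m₀ a) F = 0 := by
  have hle : Finsupp.single k 1 ≤ m₀ := by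
    rw [Finsupp.single_le_iff]
    omega
  have hsplit : monomial m₀ a = monomial (m₀ - Finsupp.single k 1) a * X k := by
    rw [X, monomial_mul, mul_one, tsub_add_cancel_of_le hle]
  rw [hsplit, contract_mul', contract_X, hF, contract_zero_right]

lemma support_subset_range {f : Fin m → Fin n} (hf : Function.Injective f)
    {P : MvPolynomial (Fin n) ℂ} (hP : P ∈ (rename f (R := ℂ)).range)
    {s : Fin n →₀ ℕ} (hs : s ∈ P.support) (k : Fin n) (hk : k ∉ Set.range f) : s k = 0 := by
  classical
  obtain ⟨p, rfl⟩ := (AlgHom.mem_range _).mp hP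
  rw [support_rename_of_injective hf] at hs
  obtain ⟨t, -, rfl⟩ := Finset.mem_image.mp hs
  exact Finsupp.mapDomain_notin_range t k hk

lemma exists_dual {f : Fin m → Fin n} (hf : Function.Injective f)
    {G : MvPolynomial (Fin n) ℂ} {d : ℕ} (hG : G.IsHomogeneous d) (h0 : G ≠ 0)
    (hGr : G ∈ (rename f (R := ℂ)).range) :
    ∃ (m₀ : Fin n →₀ ℕ) (c : ℂ), m₀ ∈ G.support ∧
      (monomial m₀ c).IsHomogeneous d ∧ (monomial m₀ c) ∈ (rename f (R := ℂ)).range ∧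
        contract (monomial m₀ c) G = 1 := by
  classical
  obtain ⟨m₀, hm₀⟩ := MvPolynomial.support_nonempty.mpr h0
  have hcoeff : G.coeff m₀ ≠ 0 := MvPolynomial.mem_support_iff.mp hm₀
  set fact : ℂ := ((∏ l : Fin n, Nat.factorial (m₀ l) : ℕ) : ℂ) with hfactdef
  have hfact : fact ≠ 0 := by
    rw [hfactdef, Nat.cast_ne_zero]
    exact Finset.prod_ne_zero_iff.mpr fun l _ => Nat.factorial_ne_zero _
  set c : ℂ := (G.coeff m₀)⁻¹ * fact⁻¹ with hcdef
  refine ⟨m₀, c, hm₀, ?_, ?_, ?_⟩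
  · exact isHomogeneous_monomial _ (isHomog_support_degree hG hm₀)
  · obtain ⟨g, rfl⟩ := (AlgHom.mem_range _).mp hGr
    rw [support_rename_of_injective hf] at hm₀
    obtain ⟨t, -, rfl⟩ := Finset.mem_image.mp hm₀
    exact (AlgHom.mem_range _).mpr ⟨monomial t c, by rw [rename_monomial]⟩
  · rw [contract_monomial_left]
    rw [Finset.sum_eq_single_of_mem m₀ hm₀]
    · rw [tsub_self]
      have hfp : (∏ l : Fin n, (Nat.descFactorial (m₀ l) (m₀ l) : ℂ)) = fact := by
        rw [hfactdef]
        push_cast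
        exact Finset.prod_congr rfl fun l _ => by rw [Nat.descFactorial_self]
      rw [hfp]
      have hval : c * G.coeff m₀ * fact = 1 := by
        rw [hcdef]
        field_simp
      rw [hval, monomial_zero', C_1]
    · intro s hs hne
      by_cases hms : m₀ ≤ s
      · exfalso
        apply hne
        have h1 : (s - m₀).degree + m₀.degree = s.degree := by
          rw [← degree_add', tsub_add_cancel_of_le hms]
        rw [isHomog_support_degree hG hm₀, isHomog_support_degree hG hs] at h1
        have h2 : (s - m₀).degree = 0 := by omega
        have h3 : s - m₀ = 0 := (Finsupp.degree_eq_zero_iff _).mp h2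
        have h4 : s ≤ m₀ := tsub_eq_zero_iff_le.mp h3
        exact le_antisymm h4 hms
      · obtain ⟨l, hl⟩ := exists_lt_of_not_le hms
        have hz : (Nat.descFactorial (s l) (m₀ l) : ℂ) = 0 := by
          rw [Nat.descFactorial_of_lt hl, Nat.cast_zero]
        rw [Finset.prod_eq_zero (Finset.mem_univ l) hz, mul_zero, monomial_zero]

lemma eq_C_of_mem_ranges {i j : ℕ} {P : MvPolynomial (Fin (i + j)) ℂ}
    (hx : P ∈ (rename (Fin.castAdd j : Fin i → Fin (i + j)) (R := ℂ)).range)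
    (hy : P ∈ (rename (Fin.natAdd i : Fin j → Fin (i + j)) (R := ℂ)).range) :
    P = C (P.coeff 0) := by
  have hι₁ : Function.Injective (Fin.castAdd j : Fin i → Fin (i + j)) :=
    Fin.castAdd_injective i j
  have hι₂ : Function.Injective (Fin.natAdd i : Fin j → Fin (i + j)) := fun a b h => by
    have h' := congrArg Fin.val h
    simp only [Fin.coe_natAdd] at h'
    exact Fin.ext (Nat.add_left_cancel h')
  have hsupp : ∀ s ∈ P.support, s = (0 : Fin (i + j) →₀ ℕ) := by
    intro s hs
    ext k
    rcases lt_or_ge (k : ℕ) i with hki | hki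
    · refine support_subset_range hι₂ hy hs k ?_
      rintro ⟨l, rfl⟩
      simp only [Fin.coe_natAdd] at hki
      omega
    · refine support_subset_range hι₁ hx hs k ?_
      rintro ⟨l, rfl⟩
      have := l.isLt
      simp only [Fin.coe_castAdd] at hki
      omega
  apply MvPolynomial.ext
  intro s
  rw [coeff_C]
  rcases eq_or_ne s 0 with rfl | hs0
  · rw [if_pos rfl]
  · rw [if_neg (Ne.symm hs0)]
    by_contra hne
    exact hs0 (hsupp s (MvPolynomial.mem_support_iff.mpr hne))

end AuxApolar

/-- Let `F = G - H` be a direct sum decomposition of degree `d`, with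
`G` a nonzero degree-`d` form in the variables `x_1,…,x_i` (the first `i` variables) and
`H` a nonzero degree-`d` form in the variables `y_1,…,y_j` (the last `j` variables).
Then there are `δ₁` of degree `d` in the dual `α`-variables with `δ₁ ⌟ G = 1` and `δ₂`
of degree `d` in the dual `β`-variables with `δ₂ ⌟ H = 1`, such that with `Δ = δ₁ + δ₂`
we have `F^⊥ = (G^⊥ ⊓ H^⊥) + ⟨Δ⟩`, and `(F^⊥)_k = (G^⊥ ⊓ H^⊥)_k` for all `k ≠ d`. -/



theorem apolar_ideal_of_direct_sum
    (i j d : ℕ) (hd : 1 ≤ d) (G H : MvPolynomial (Fin (i + j)) ℂ)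
    (hGhom : G.IsHomogeneous d) (hHhom : H.IsHomogeneous d)
    (hG0 : G ≠ 0) (hH0 : H ≠ 0)
    (hGx : G ∈ (rename (Fin.castAdd j : Fin i → Fin (i + j))
      (R := ℂ)).range)
    (hHy : H ∈ (rename (Fin.natAdd i : Fin j → Fin (i + j))
      (R := ℂ)).range) :
    ∃ δ₁ δ₂ : MvPolynomial (Fin (i + j)) ℂ,
      δ₁.IsHomogeneous d ∧ δ₂.IsHomogeneous d ∧
      δ₁ ∈ (rename (Fin.castAdd j : Fin i → Fin (i + j)) (R := ℂ)).range ∧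
      δ₂ ∈ (rename (Fin.natAdd i : Fin j → Fin (i + j)) (R := ℂ)).range ∧
      contract δ₁ G = 1 ∧ contract δ₂ H = 1 ∧
      apolarIdeal (G - H) = apolarIdeal G ⊓ apolarIdeal H + Ideal.span {δ₁ + δ₂} ∧
      (∀ k : ℕ, k ≠ d → ∀ Θ : MvPolynomial (Fin (i + j)) ℂ, Θ.IsHomogeneous k →
        (Θ ∈ apolarIdeal (G - H) ↔ Θ ∈ apolarIdeal G ⊓ apolarIdeal H)) := by
  classical
  have hι₁ : Function.Injective (Fin.castAdd j : Fin i → Fin (i + j)) :=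
    Fin.castAdd_injective i j
  have hι₂ : Function.Injective (Fin.natAdd i : Fin j → Fin (i + j)) := fun a b h => by
    have h' := congrArg Fin.val h
    simp only [Fin.coe_natAdd] at h'
    exact Fin.ext (Nat.add_left_cancel h')
  obtain ⟨m₁, c₁, hm₁, hδ₁hom, hδ₁mem, hδ₁G⟩ := exists_dual hι₁ hGhom hG0 hGx
  obtain ⟨m₂, c₂, hm₂, hδ₂hom, hδ₂mem, hδ₂H⟩ := exists_dual hι₂ hHhom hH0 hHy
  have hδ₁H : contract (monomial m₁ c₁) H = 0 := by
    have hm₁0 : m₁ ≠ 0 := by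
      intro h
      have hdeg := isHomog_support_degree hGhom hm₁
      rw [h, map_zero] at hdeg
      omega
    obtain ⟨k, hk⟩ := Finsupp.support_nonempty_iff.mpr hm₁0
    have hk0 : m₁ k ≠ 0 := Finsupp.mem_support_iff.mp hk
    have hkr : k ∈ Set.range (Fin.castAdd j : Fin i → Fin (i + j)) := by
      by_contra hkr
      exact hk0 (support_subset_range hι₁ hGx hm₁ k hkr)
    have hk2 : k ∉ Set.range (Fin.natAdd i : Fin j → Fin (i + j)) := by
      rintro ⟨l, rfl⟩
      obtain ⟨l', hl'⟩ := hkr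
      have h' := congrArg Fin.val hl'
      simp only [Fin.coe_natAdd, Fin.coe_castAdd] at h'
      have := l'.isLt
      omega
    obtain ⟨h, rfl⟩ := (AlgHom.mem_range _).mp hHy
    exact contract_monomial_eq_zero hk0 c₁ (pderiv_rename_zero k hk2 h)
  have hδ₂G : contract (monomial m₂ c₂) G = 0 := by
    have hm₂0 : m₂ ≠ 0 := by
      intro h
      have hdeg := isHomog_support_degree hHhom hm₂
      rw [h, map_zero] at hdeg
      omega
    obtain ⟨k, hk⟩ := Finsupp.support_nonempty_iff.mpr hm₂0
    have hk0 : m₂ k ≠ 0 := Finsupp.mem_support_iff.mp hk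
    have hkr : k ∈ Set.range (Fin.natAdd i : Fin j → Fin (i + j)) := by
      by_contra hkr
      exact hk0 (support_subset_range hι₂ hHy hm₂ k hkr)
    have hk2 : k ∉ Set.range (Fin.castAdd j : Fin i → Fin (i + j)) := by
      rintro ⟨l, rfl⟩
      obtain ⟨l', hl'⟩ := hkr
      have h' := congrArg Fin.val hl'
      simp only [Fin.coe_natAdd, Fin.coe_castAdd] at h'
      have := l.isLt
      omega
    obtain ⟨g, rfl⟩ := (AlgHom.mem_range _).mp hGx
    exact contract_monomial_eq_zero hk0 c₂ (pderiv_rename_zero k hk2 g)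
  have hΔG : contract (monomial m₁ c₁ + monomial m₂ c₂) G = 1 := by
    rw [contract_add_left, hδ₁G, hδ₂G, add_zero]
  have hΔH : contract (monomial m₁ c₁ + monomial m₂ c₂) H = 1 := by
    rw [contract_add_left, hδ₁H, hδ₂H, zero_add]
  have hΔF : contract (monomial m₁ c₁ + monomial m₂ c₂) (G - H) = 0 := by
    rw [contract_sub_right, hΔG, hΔH, sub_self]
  have hsmul_one : ∀ c : ℂ, c • (1 : MvPolynomial (Fin (i + j)) ℂ) = C c := by
    intro c; rw [MvPolynomial.smul_eq_C_mul, mul_one]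
  have hkey : ∀ Θ : MvPolynomial (Fin (i + j)) ℂ, contract Θ (G - H) = 0 →
      contract Θ G = contract Θ H ∧ contract Θ G = C ((contract Θ G).coeff 0) := by
    intro Θ hΘ
    have heq : contract Θ G = contract Θ H := by
      have h' := contract_sub_right Θ G H
      rw [hΘ] at h'
      exact sub_eq_zero.mp h'.symm
    refine ⟨heq, eq_C_of_mem_ranges (contract_mem_range hι₁ Θ hGx) ?_⟩
    rw [heq]
    exact contract_mem_range hι₂ Θ hHy
  refine ⟨monomial m₁ c₁, monomial m₂ c₂, hδ₁hom, hδ₂hom, hδ₁mem, hδ₂mem, hδ₁G, hδ₂H, ?_, ?_⟩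
  · apply le_antisymm
    · intro Θ hΘ
      rw [mem_apolarIdeal] at hΘ
      obtain ⟨heq, hC⟩ := hkey Θ hΘ
      set c := (contract Θ G).coeff 0 with hc
      rw [Submodule.add_eq_sup, Submodule.mem_sup]
      refine ⟨Θ - c • (monomial m₁ c₁ + monomial m₂ c₂), ?_,
        c • (monomial m₁ c₁ + monomial m₂ c₂), ?_, sub_add_cancel _ _⟩
      · rw [Submodule.mem_inf]
        constructor
        · rw [mem_apolarIdeal, contract_sub_left, contract_smul_left, hΔG, hsmul_one, ← hC]
          exact sub_self _
        · rw [mem_apolarIdeal, contract_sub_left, contract_smul_left, hΔH, hsmul_one, ← heq,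
            ← hC]
          exact sub_self _
      · rw [MvPolynomial.smul_eq_C_mul]
        exact Ideal.mul_mem_left _ _ (Ideal.subset_span (Set.mem_singleton _))
    · intro Θ hΘ
      rw [Submodule.add_eq_sup, Submodule.mem_sup] at hΘ
      obtain ⟨a, ha, b, hb, rfl⟩ := hΘ
      rw [Submodule.mem_inf] at ha
      obtain ⟨haG, haH⟩ := ha
      rw [mem_apolarIdeal] at haG haH ⊢
      obtain ⟨r, rfl⟩ := Ideal.mem_span_singleton.mp hb
      rw [contract_add_left, contract_sub_right, haG, haH, sub_self, zero_add, mul_comm,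
        contract_mul', hΔF, contract_zero_right]
  · intro k hk Θ hΘhom
    constructor
    · intro hmem
      rw [mem_apolarIdeal] at hmem
      obtain ⟨heq, hC⟩ := hkey Θ hmem
      rcases lt_or_gt_of_ne hk with hkd | hkd
      · have hhom := contract_isHomogeneous hΘhom hGhom
        have h0 : (contract Θ G).coeff 0 = 0 := by
          apply hhom.coeff_eq_zero
          rw [map_zero]
          omega
        have hG' : contract Θ G = 0 := by rw [hC, h0, C_0]
        rw [Submodule.mem_inf]
        exact ⟨mem_apolarIdeal.mpr hG', mem_apolarIdeal.mpr (by rw [← heq]; exact hG')⟩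
      · have hG' := contract_eq_zero_of_lt hΘhom hGhom hkd
        have hH' := contract_eq_zero_of_lt hΘhom hHhom hkd
        rw [Submodule.mem_inf]
        exact ⟨mem_apolarIdeal.mpr hG', mem_apolarIdeal.mpr hH'⟩
    · intro hmem
      rw [Submodule.mem_inf] at hmem
      rw [mem_apolarIdeal, contract_sub_right, mem_apolarIdeal.mp hmem.1,
        mem_apolarIdeal.mp hmem.2, sub_self]
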